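/- For every n ∈ ℕ and every x ∈ H_n: |||τ_n(x)|||_0 ≤ |||x|||_{N_n+1}. -/

import Mathlib

open scoped Classical in
/-- The function `Next` from Definition 4.1, defined from the sequence `(b_n)`. -/
noncomputable def nextFn (b : ℕ → ℕ) : ℕ × ℕ → ℕ × ℕ :=
  fun p =>
    if (∃ n : ℕ, 1 ≤ n ∧ p.1 = b n ∧ Even p.2 ∧ p.2 < 2 * n) ∨
       (∃ n : ℕ, 1 ≤ n ∧ p.1 = 2 * b n + 1 ∧ Odd p.2 ∧ 0 < p.2 ∧ p.2 ≤ 2 * n) ∨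
       (p.1 = 0 ∧ Odd p.2) then
      (p.1, p.2 + 1)
    else if (∃ n : ℕ, 1 ≤ n ∧ p.1 = b n + 1 ∧ Odd p.2 ∧ p.2 < 2 * n) ∨
        (∃ n : ℕ, 1 ≤ n ∧ p.1 = 2 * b n ∧ Even p.2 ∧ 0 < p.2 ∧ p.2 ≤ 2 * n) then
      (p.1, p.2 - 1)
    else if Even p.2 then (p.1 + 1, p.2)
    else (p.1 - 1, p.2)

/-- `enum k = Next^k (0, 0)`, the `k`-th element of the ordering of `ℕ × ℕ` defined by `Next`. -/
noncomputable def enum (b : ℕ → ℕ) (k : ℕ) : ℕ × ℕ := (nextFn b)^[k] (0, 0)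

/-- The basis vector `e_k = e_{n,m}` where `pos (n, m) = k`, in `s₀,₀^ℕ = ℕ × ℕ →₀ ℝ`. -/
noncomputable def eVec (b : ℕ → ℕ) (k : ℕ) : ℕ × ℕ →₀ ℝ := Finsupp.single (enum b k) 1

/-- `|(x_{i,j})_i|_N = Σ_i |x_{i,j}| A_{N,i}`, the `N`-th seminorm of the `j`-th column. -/
noncomputable def colNorm (A : ℕ → ℕ → ℝ) (N : ℕ) (x : ℕ × ℕ → ℝ) (j : ℕ) : ℝ :=
  ∑' i : ℕ, |x (i, j)| * A N i

/-- `‖x‖_N = Σ_{j ≤ N} |(x_{i,j})_i|_N`, the seminorms of `s^ℕ`. -/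
noncomputable def normK (A : ℕ → ℕ → ℝ) (N : ℕ) (x : ℕ × ℕ → ℝ) : ℝ :=
  ∑ j ∈ Finset.range (N + 1), colNorm A N x j

/-- `|||x|||_N = Σ_j |(x_{i,j})_i|_N`, the norms of `s₀^ℕ`. -/
noncomputable def norm3 (A : ℕ → ℕ → ℝ) (N : ℕ) (x : ℕ × ℕ → ℝ) : ℝ :=
  ∑' j : ℕ, colNorm A N x j

/- ------------------------------------------------------------------ -/
/- Auxiliary lemmas                                                    -/
/- ------------------------------------------------------------------ -/

open Finset in
lemma norm3_eq_support_sum (A : ℕ → ℕ → ℝ) (M : ℕ) (y : ℕ × ℕ →₀ ℝ) :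
    norm3 A M ⇑y = ∑ p ∈ y.support, |y p| * A M p.1 := by
  classical
  have hcol : ∀ j, colNorm A M ⇑y j
      = ∑ p ∈ y.support.filter (fun p => p.2 = j), |y p| * A M p.1 := by
    intro j
    have h1 : colNorm A M ⇑y j
        = ∑ i ∈ (y.support.filter (fun p => p.2 = j)).image Prod.fst, |y (i, j)| * A M i := by
      apply tsum_eq_sum
      intro i hi
      have h0 : y (i, j) = 0 := by
        by_contra h
        exact hi (Finset.mem_image.2 ⟨(i,j), Finset.mem_filter.2
          ⟨Finsupp.mem_support_iff.2 h, rfl⟩, rfl⟩)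
      simp [h0]
    rw [h1, Finset.sum_image ?inj]
    case inj =>
      intro p hp p' hp' hfst
      have hp2 : p.2 = j := (Finset.mem_filter.1 hp).2
      have hp2' : p'.2 = j := (Finset.mem_filter.1 hp').2
      exact Prod.ext hfst (hp2.trans hp2'.symm)
    apply Finset.sum_congr rfl
    intro p hp
    have hp2 : p.2 = j := (Finset.mem_filter.1 hp).2
    rw [show (p.1, j) = p from Prod.ext rfl hp2.symm]
  have h2 : norm3 A M ⇑y = ∑ j ∈ y.support.image Prod.snd, colNorm A M ⇑y j := by
    apply tsum_eq_sum
    intro j hj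
    rw [hcol j]
    apply Finset.sum_eq_zero
    intro p hp
    exact absurd (Finset.mem_image.2 ⟨p, (Finset.mem_filter.1 hp).1, (Finset.mem_filter.1 hp).2⟩) hj
  rw [h2]
  have := Finset.sum_fiberwise_of_maps_to (s := y.support) (t := y.support.image Prod.snd)
    (g := Prod.snd) (fun p hp => Finset.mem_image_of_mem _ hp) (fun p => |y p| * A M p.1)
  rw [← this]
  exact Finset.sum_congr rfl fun j _ => hcol j

lemma norm3_eq_sum_of_subset (A : ℕ → ℕ → ℝ) (M : ℕ) (y : ℕ × ℕ →₀ ℝ)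
    (S : Finset (ℕ × ℕ)) (h : y.support ⊆ S) :
    norm3 A M ⇑y = ∑ p ∈ S, |y p| * A M p.1 := by
  rw [norm3_eq_support_sum]
  apply Finset.sum_subset h
  intro p _ hp
  rw [Finsupp.notMem_support_iff.1 hp]
  simp

lemma norm3_add_le (A : ℕ → ℕ → ℝ) (hA : ∀ N i, 0 ≤ A N i) (M : ℕ) (y z : ℕ × ℕ →₀ ℝ) :
    norm3 A M ⇑(y + z) ≤ norm3 A M ⇑y + norm3 A M ⇑z := by
  classical
  rw [norm3_eq_sum_of_subset A M (y+z) (y.support ∪ z.support)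
      (Finsupp.support_add),
    norm3_eq_sum_of_subset A M y (y.support ∪ z.support) (Finset.subset_union_left),
    norm3_eq_sum_of_subset A M z (y.support ∪ z.support) (Finset.subset_union_right),
    ← Finset.sum_add_distrib]
  apply Finset.sum_le_sum
  intro p _
  rw [← add_mul]
  apply mul_le_mul_of_nonneg_right _ (hA M p.1)
  simpa using abs_add_le (y p) (z p)

lemma norm3_smul (A : ℕ → ℕ → ℝ) (M : ℕ) (c : ℝ) (y : ℕ × ℕ →₀ ℝ) :
    norm3 A M ⇑(c • y) = |c| * norm3 A M ⇑y := by
  classical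
  rw [norm3_eq_sum_of_subset A M (c • y) y.support (Finsupp.support_smul),
    norm3_eq_support_sum, Finset.mul_sum]
  apply Finset.sum_congr rfl
  intro p _
  rw [Finsupp.smul_apply, smul_eq_mul, abs_mul, mul_assoc]

lemma norm3_neg (A : ℕ → ℕ → ℝ) (M : ℕ) (y : ℕ × ℕ →₀ ℝ) :
    norm3 A M ⇑(-y) = norm3 A M ⇑y := by
  have := norm3_smul A M (-1) y
  simpa using this

lemma norm3_single (A : ℕ → ℕ → ℝ) (M : ℕ) (p : ℕ × ℕ) (c : ℝ) :
    norm3 A M ⇑(Finsupp.single p c) = |c| * A M p.1 := by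
  classical
  rw [norm3_eq_sum_of_subset A M _ {p} Finsupp.support_single_subset]
  simp

lemma norm3_eVec (A : ℕ → ℕ → ℝ) (M : ℕ) (b : ℕ → ℕ) (k : ℕ) :
    norm3 A M ⇑(eVec b k) = A M (enum b k).1 := by
  rw [eVec, norm3_single]
  simp

lemma norm3_sub_le (A : ℕ → ℕ → ℝ) (hA : ∀ N i, 0 ≤ A N i) (M : ℕ) (y z : ℕ × ℕ →₀ ℝ) :
    norm3 A M ⇑(y - z) ≤ norm3 A M ⇑y + norm3 A M ⇑z := by
  have h := norm3_add_le A hA M y (-z)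
  rw [norm3_neg] at h
  simpa [sub_eq_add_neg] using h

lemma norm3_sum_le (A : ℕ → ℕ → ℝ) (hA : ∀ N i, 0 ≤ A N i) (M : ℕ)
    {ι : Type*} (s : Finset ι) (g : ι → (ℕ × ℕ →₀ ℝ)) :
    norm3 A M ⇑(∑ i ∈ s, g i) ≤ ∑ i ∈ s, norm3 A M ⇑(g i) := by
  classical
  induction s using Finset.induction with
  | empty =>
    rw [Finset.sum_empty, Finset.sum_empty, norm3_eq_support_sum]
    simp
  | insert _ _ hi ih =>
    rw [Finset.sum_insert hi, Finset.sum_insert hi]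
    exact le_trans (norm3_add_le A hA M _ _) (by linarith)

lemma norm3_nonneg (A : ℕ → ℕ → ℝ) (hA : ∀ N i, 0 ≤ A N i) (M : ℕ) (y : ℕ × ℕ →₀ ℝ) :
    0 ≤ norm3 A M ⇑y := by
  rw [norm3_eq_support_sum]
  exact Finset.sum_nonneg fun p _ => mul_nonneg (abs_nonneg _) (hA M p.1)

lemma nextFn_row0 (b : ℕ → ℕ) (i : ℕ) (h : ∀ m, 1 ≤ m → i ≠ b m) :
    nextFn b (i, 0) = (i + 1, 0) := by
  have hodd : ¬ Odd (0 : ℕ) := by decide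
  rw [nextFn]
  rw [if_neg, if_neg, if_pos Even.zero]
  · rintro (⟨m, hm, hb, ho, _⟩ | ⟨m, hm, hb, _, h0, _⟩)
    · exact hodd ho
    · exact absurd h0 (by omega)
  · rintro (⟨m, hm, hb, _, _⟩ | ⟨m, hm, hb, ho, _⟩ | ⟨h0, ho⟩)
    · exact h m hm hb
    · exact hodd ho
    · exact hodd ho

lemma nextFn_fst_le (b : ℕ → ℕ) (p : ℕ × ℕ) : (nextFn b p).1 ≤ p.1 + 1 := by
  rw [nextFn]
  split_ifs <;> simp <;> omega

/-- For every `n` and every `x ∈ H_n`, `|||τ_n x|||₀ ≤ |||x|||_{N_n + 1}`. -/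
theorem tau_estimate
    (A : ℕ → ℕ → ℝ) (b : ℕ → ℕ) (pos : ℕ × ℕ → ℕ)
    (Nn a s : ℕ → ℕ) (D : ℕ → ℝ) (Δ : ℕ → ℕ) (α : ℕ → ℝ)
    (T : (ℕ × ℕ →₀ ℝ) →ₗ[ℝ] (ℕ × ℕ →₀ ℝ))
    (τ : ℕ → (ℕ × ℕ →₀ ℝ) →ₗ[ℝ] (ℕ × ℕ →₀ ℝ))
    (hA1 : ∀ N j, 1 ≤ A N j)
    (hA2m : ∀ j, Monotone fun N => A N j)
    (hA2u : ∀ j, ¬ BddAbove (Set.range fun N => A N j))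
    (hA3m : ∀ N, Monotone fun j => A N j)
    (hA3u : ∀ N, ¬ BddAbove (Set.range fun j => A N j))
    (hA4 : ∀ N j, A N (j + 1) ≤ 2 * A N j)
    (hA5 : ∀ N, Filter.Tendsto (fun j => A N j / A (N + 1) j) Filter.atTop (nhds 0))
    (hA6 : ∀ N, Filter.Tendsto (fun j => (2 : ℝ) ^ j / A N j) Filter.atTop Filter.atTop)
    (hbpos : ∀ n, 1 ≤ n → 0 < b n)
    (hbmono : ∀ n, 1 ≤ n → b n < b (n + 1))
    (hbgap : ∀ n, 1 ≤ n → 2 * b n + 1 < b (n + 1))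
    (hpos : ∀ p k, pos p = k ↔ (nextFn b)^[k] (0, 0) = p)
    (hNle : ∀ n, Nn n ≤ n)
    (hNinf : ∀ N m, ∃ n, m ≤ n ∧ Nn n = N)
    (hD : ∀ n, 1 ≤ D n)
    (hΔ0 : Δ 0 = 1)
    (hΔ : ∀ n, Δ (n + 1) = a n + pos (Δ n, 0))
    (hord0 : Δ 0 < a 0 ∧ a 0 < Δ 1)
    (hord : ∀ n, 1 ≤ n → Δ n < b n ∧ 2 * b n < s n ∧ s n < a n ∧ a n < Δ (n + 1))
    (hbΔ : ∀ n, 1 ≤ n → 2 * pos (Δ n, 0) ≤ b n)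
    (hc2bn : ∀ n k, 1 ≤ n → b n ≤ k →
      (4 : ℝ) ^ pos (Δ n, 0) * A (Nn (n - 1) + 1) k ≤ A (Nn (n - 1) + 2) k / D (n - 1))
    (hc1 : ∀ n, 1 ≤ n →
      A (Nn n) (a n) * (2 * D (n - 1)) ^ (pos (s n, 0) - pos (Δ n, 0) - 1) ≤
        (2 : ℝ) ^ (pos (a n, 0) - pos (s n, 0) - 1))
    (hc2 : ∀ n, 1 ≤ n → A (Nn (n - 1)) (a (n - 1)) ≤ A (Nn n) (a n))
    (hc4 : ∀ n, 1 ≤ n → D (n - 1) * A (Nn (n - 1)) (b n) ≤ A (Nn n) (a n))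
    (hc3 : ∀ n, A (Nn n) (a n) * 4 ^ pos (Δ n, 0) * A 0 0 ≤ A (Nn n + 1) (a n))
    (hc1' : A (Nn 0) (a 0) ≤ (2 : ℝ) ^ (pos (a 0, 0) - pos (Δ 0, 0) - 1))
    (hα0 : ∀ j, pos (Δ 0, 0) ≤ j → j < pos (a 0, 0) →
      α j = (2 : ℝ) ^ (j - pos (Δ 0, 0)) / A (Nn 0) (a 0))
    (hα1 : ∀ n j, 1 ≤ n → pos (Δ n, 0) ≤ j → j < pos (s n, 0) →
      α j = (1 / A (Nn n) (a n)) * ((2 * D (n - 1)) ^ (j - pos (Δ n, 0)))⁻¹)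
    (hα2 : ∀ n j, 1 ≤ n → pos (s n, 0) ≤ j → j < pos (a n, 0) →
      α j = α (pos (s n, 0) - 1) * 2 ^ (j - pos (s n, 0)))
    (hT0 : T (eVec b 0) = α 1 • eVec b 1)
    (hTa : ∀ n j, pos (Δ n, 0) ≤ j → j + 1 < pos (a n, 0) →
      T (eVec b j) = (α (j + 1) / α j) • eVec b (j + 1))
    (hTb : ∀ n : ℕ, T (eVec b (pos (a n, 0) - 1)) =
      (α (pos (a n, 0) - 1))⁻¹ • ((A (Nn n) (a n))⁻¹ • eVec b (pos (a n, 0)) + eVec b 0))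
    (hTc : ∀ n j, pos (a n, 0) ≤ j → j + 1 < pos (Δ (n + 1), 0) →
      T (eVec b j) = eVec b (j + 1))
    (hTd : ∀ n : ℕ, T (eVec b (pos (Δ (n + 1), 0) - 1)) =
      (A (Nn n) (a n) * α (pos (Δ (n + 1), 0))) • eVec b (pos (Δ (n + 1), 0)) -
        (A (Nn n) (a n) * α (pos (Δ n, 0))) • eVec b (pos (Δ n, 0)))
    (hτ : ∀ (n : ℕ) (y : ℕ → ℝ),
      τ n (∑ j ∈ Finset.range (pos (Δ (n + 1), 0)), y j • (T ^ j) (eVec b 0)) =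
        ∑ j ∈ Finset.range (pos (a n, 0)), y j • (T ^ j) (eVec b 0))
    :
    ∀ n : ℕ, ∀ x ∈ Submodule.span ℝ (eVec b '' {j | j < pos (Δ (n + 1), 0)}),
      norm3 A 0 ⇑(τ n x) ≤ norm3 A (Nn n + 1) ⇑x := by
  classical
  intro n x hx
  -- basic positivity facts for A
  have hApos : ∀ N i, 0 < A N i := fun N i => lt_of_lt_of_le one_pos (hA1 N i)
  have hA0' : ∀ N i, 0 ≤ A N i := fun N i => (hApos N i).le
  -- the enumeration and `pos` are mutually inverse
  have henum_pos : ∀ p, enum b (pos p) = p := fun p => (hpos p (pos p)).mp rfl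
  have hpos_enum : ∀ k, pos (enum b k) = k := fun k => (hpos (enum b k) k).mpr rfl
  have henum_inj : Function.Injective (enum b) := by
    intro k k' h
    rw [← hpos_enum k, ← hpos_enum k', h]
  have henum_zero : enum b 0 = (0, 0) := rfl
  have henum_succ : ∀ k, enum b (k + 1) = nextFn b (enum b k) := by
    intro k
    exact Function.iterate_succ_apply' _ _ _
  have hfst_le : ∀ k, (enum b k).1 ≤ k := by
    intro k
    induction k with
    | zero => simp [henum_zero]
    | succ k ih =>
      rw [henum_succ]
      have := nextFn_fst_le b (enum b k)
      omega
  -- monotonicity of b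
  have hbm : ∀ m n', 1 ≤ m → m ≤ n' → b m ≤ b n' := by
    intro m n' hm
    induction n' with
    | zero => intro h; exact absurd h (by omega)
    | succ n' ih =>
      intro hmn
      rcases Nat.lt_or_ge n' m with h | h
      · have hh : m = n' + 1 := by omega
        rw [hh]
      · exact le_trans (ih h) (le_of_lt (hbmono n' (by omega)))
  -- pos (Δ 0, 0) = 1
  have henum_one : enum b 1 = (1, 0) := by
    have h0 : enum b 1 = nextFn b (enum b 0) := henum_succ 0
    rw [h0, henum_zero, nextFn_row0 b 0 (fun m hm => by have := hbpos m hm; omega)]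
  have hq0 : pos (Δ 0, 0) = 1 := by
    rw [hΔ0, ← henum_one, hpos_enum]
  -- walking to the right along the bottom row from (a m, 0)
  have hra : ∀ m t, t ≤ pos (Δ m, 0) → enum b (pos (a m, 0) + t) = (a m + t, 0) := by
    intro m t
    induction t with
    | zero =>
      intro _
      simpa using henum_pos (a m, 0)
    | succ t ih =>
      intro ht
      have hne : ∀ mm, 1 ≤ mm → a m + t ≠ b mm := by
        intro mm hmm
        rcases le_or_gt mm m with hle | hlt
        · have h1 : b mm ≤ b m := hbm mm m hmm hle
          have h2 := hord m (le_trans hmm hle)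
          have h3 := hbpos m (le_trans hmm hle)
          omega
        · have h1 : b (m+1) ≤ b mm := hbm (m+1) mm (by omega) hlt
          have h2 := (hord (m+1) (by omega)).1
          have h3 := hΔ m
          omega
      calc enum b (pos (a m, 0) + (t+1)) = nextFn b (enum b (pos (a m, 0) + t)) :=
            henum_succ _
        _ = nextFn b (a m + t, 0) := by rw [ih (by omega)]
        _ = (a m + t + 1, 0) := nextFn_row0 _ _ hne
        _ = (a m + (t+1), 0) := by rw [Nat.add_assoc]
  have hqsucc : ∀ m, pos (Δ (m+1), 0) = pos (a m, 0) + pos (Δ m, 0) := by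
    intro m
    rw [hΔ m, ← hra m (pos (Δ m, 0)) le_rfl, hpos_enum]
  have ha_le_r : ∀ m, a m ≤ pos (a m, 0) := by
    intro m
    have h := hfst_le (pos (a m, 0))
    rw [henum_pos (a m, 0)] at h
    exact h
  have hs_le_ps : ∀ m, s m ≤ pos (s m, 0) := by
    intro m
    have h := hfst_le (pos (s m, 0))
    rw [henum_pos (s m, 0)] at h
    exact h
  have ha0 : 2 ≤ a 0 := by
    have := hord0.1
    omega
  have hq_lt_r : ∀ m, pos (Δ m, 0) < pos (a m, 0) := by
    intro m
    cases m with
    | zero =>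
      have := ha_le_r 0
      omega
    | succ m' =>
      have h1 := hbΔ (m'+1) (by omega)
      have h2 := hord (m'+1) (by omega)
      have h3 := ha_le_r (m'+1)
      have h4 := hbpos (m'+1) (by omega)
      omega
  have hq_pos : ∀ m, 1 ≤ pos (Δ m, 0) := by
    intro m
    induction m with
    | zero => omega
    | succ m ih =>
      rw [hqsucc m]
      omega
  have hq_lt_ps : ∀ m, 1 ≤ m → pos (Δ m, 0) < pos (s m, 0) := by
    intro m hm
    have h1 := hbΔ m hm
    have h2 := hord m hm
    have h3 := hs_le_ps m
    have h4 := hbpos m hm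
    omega
  -- positivity and upper bound for α on the α-region
  have hαf : ∀ m j, pos (Δ m, 0) ≤ j → j < pos (a m, 0) → 0 < α j ∧ α j ≤ 2 ^ j := by
    intro m j hj hjr
    cases m with
    | zero =>
      rw [hα0 j hj hjr]
      constructor
      · exact div_pos (pow_pos two_pos _) (hApos _ _)
      · calc (2:ℝ) ^ (j - pos (Δ 0, 0)) / A (Nn 0) (a 0) ≤ 2 ^ (j - pos (Δ 0, 0)) :=
              div_le_self (pow_nonneg two_pos.le _) (hA1 _ _)
          _ ≤ 2 ^ j := pow_le_pow_right₀ one_le_two (Nat.sub_le _ _)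
    | succ m' =>
      have hm : 1 ≤ m' + 1 := by omega
      have h2D : (1:ℝ) ≤ 2 * D (m' + 1 - 1) := by
        have := hD (m' + 1 - 1)
        linarith
      have key1 : ∀ j', pos (Δ (m'+1), 0) ≤ j' → j' < pos (s (m'+1), 0) →
          0 < α j' ∧ α j' ≤ 1 := by
        intro j' h1 h2
        rw [hα1 (m'+1) j' hm h1 h2]
        have hpow : (1:ℝ) ≤ (2 * D (m' + 1 - 1)) ^ (j' - pos (Δ (m'+1), 0)) :=
          one_le_pow₀ h2D
        constructor
        · exact mul_pos (div_pos one_pos (hApos _ _)) (inv_pos.2 (lt_of_lt_of_le one_pos hpow))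
        · have hh1 : 1 / A (Nn (m'+1)) (a (m'+1)) ≤ 1 := by
            rw [div_le_one (hApos _ _)]
            exact hA1 _ _
          have hh2 : ((2 * D (m' + 1 - 1)) ^ (j' - pos (Δ (m'+1), 0)))⁻¹ ≤ 1 :=
            inv_le_one_of_one_le₀ hpow
          have hh3 : (0:ℝ) ≤ ((2 * D (m' + 1 - 1)) ^ (j' - pos (Δ (m'+1), 0)))⁻¹ :=
            inv_nonneg.2 (le_trans zero_le_one hpow)
          calc 1 / A (Nn (m'+1)) (a (m'+1)) * ((2 * D (m' + 1 - 1)) ^ (j' - pos (Δ (m'+1), 0)))⁻¹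
              ≤ 1 * 1 := mul_le_mul hh1 hh2 hh3 zero_le_one
            _ = 1 := one_mul 1
      rcases Nat.lt_or_ge j (pos (s (m'+1), 0)) with hcase | hcase
      · have h := key1 j hj hcase
        exact ⟨h.1, le_trans h.2 (one_le_pow₀ one_le_two)⟩
      · rw [hα2 (m'+1) j hm hcase hjr]
        have hps1 : pos (Δ (m'+1), 0) ≤ pos (s (m'+1), 0) - 1 := by
          have := hq_lt_ps (m'+1) hm
          omega
        have hps2 : pos (s (m'+1), 0) - 1 < pos (s (m'+1), 0) := by
          have := hq_lt_ps (m'+1) hm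
          omega
        have hbase := key1 _ hps1 hps2
        constructor
        · exact mul_pos hbase.1 (pow_pos two_pos _)
        · calc α (pos (s (m'+1), 0) - 1) * 2 ^ (j - pos (s (m'+1), 0))
              ≤ 1 * 2 ^ j := by
                apply mul_le_mul hbase.2 (pow_le_pow_right₀ one_le_two (Nat.sub_le _ _))
                  (pow_nonneg two_pos.le _) zero_le_one
            _ = 2 ^ j := one_mul _
  -- growth bound for A 0
  have hA0pow : ∀ i, A 0 i ≤ 2 ^ i * A 0 0 := by
    intro i
    induction i with
    | zero => simp
    | succ i ih =>
      calc A 0 (i+1) ≤ 2 * A 0 i := hA4 0 i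
        _ ≤ 2 * (2 ^ i * A 0 0) := by linarith
        _ = 2 ^ (i+1) * A 0 0 := by ring
  have hA0enum : ∀ k, A 0 (enum b k).1 ≤ 2 ^ k * A 0 0 := by
    intro k
    calc A 0 (enum b k).1 ≤ 2 ^ (enum b k).1 * A 0 0 := hA0pow _
      _ ≤ 2 ^ k * A 0 0 := by
          apply mul_le_mul_of_nonneg_right _ (hA0' 0 0)
          exact pow_le_pow_right₀ one_le_two (hfst_le k)
  -- the orbit of e₀ under T
  set F : ℕ → (ℕ × ℕ →₀ ℝ) := fun j => (T ^ j) (eVec b 0) with hFdef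
  have hF0 : F 0 = eVec b 0 := by
    simp only [hFdef, pow_zero, Module.End.one_apply]
  have hFsucc : ∀ j, F (j + 1) = T (F j) := by
    intro j
    simp only [hFdef]
    rw [pow_succ']
    rfl
  -- the structure of F on one generation
  have hreg : ∀ m, F (pos (Δ m, 0)) = α (pos (Δ m, 0)) • eVec b (pos (Δ m, 0)) →
      (∀ j, pos (Δ m, 0) ≤ j → j < pos (a m, 0) → F j = α j • eVec b j) ∧
      (∀ t, t < pos (Δ m, 0) →
        F (pos (a m, 0) + t) = (A (Nn m) (a m))⁻¹ • eVec b (pos (a m, 0) + t) + F t) ∧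
      F (pos (Δ (m+1), 0)) = α (pos (Δ (m+1), 0)) • eVec b (pos (Δ (m+1), 0)) := by
    intro m hbase
    have hAne : (A (Nn m) (a m)) ≠ 0 := ne_of_gt (hApos _ _)
    have hAreg : ∀ j, pos (Δ m, 0) ≤ j → j < pos (a m, 0) → F j = α j • eVec b j := by
      intro j hj
      induction j, hj using Nat.le_induction with
      | base => intro _; exact hbase
      | succ j hj ih =>
        intro hj1
        have hjr : j < pos (a m, 0) := by omega
        have hαj : α j ≠ 0 := ne_of_gt (hαf m j hj hjr).1
        rw [hFsucc j, ih hjr, map_smul, hTa m j hj (by omega), smul_smul,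
          mul_comm (α j), div_mul_cancel₀ _ hαj]
    have hS : ∀ t, t < pos (Δ m, 0) →
        F (pos (a m, 0) + t) = (A (Nn m) (a m))⁻¹ • eVec b (pos (a m, 0) + t) + F t := by
      intro t
      induction t with
      | zero =>
        intro _
        have h1 : 1 ≤ pos (a m, 0) := by
          have := hq_lt_r m
          omega
        have hj : pos (Δ m, 0) ≤ pos (a m, 0) - 1 := by
          have := hq_lt_r m
          omega
        have hjr : pos (a m, 0) - 1 < pos (a m, 0) := by omega
        have hαj : α (pos (a m, 0) - 1) ≠ 0 := ne_of_gt (hαf m _ hj hjr).1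
        have hstep : F (pos (a m, 0)) = T (F (pos (a m, 0) - 1)) := by
          conv_lhs => rw [show pos (a m, 0) = (pos (a m, 0) - 1) + 1 from by omega]
          exact hFsucc _
        rw [Nat.add_zero, hstep, hAreg _ hj hjr, map_smul, hTb m, smul_smul,
          mul_inv_cancel₀ hαj, one_smul, hF0]
      | succ t ih =>
        intro ht
        have ht' : t < pos (Δ m, 0) := by omega
        have hrr : pos (a m, 0) + t + 1 < pos (Δ (m+1), 0) := by
          rw [hqsucc m]
          omega
        have hstep : F (pos (a m, 0) + (t+1)) = T (F (pos (a m, 0) + t)) := by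
          rw [show pos (a m, 0) + (t+1) = (pos (a m, 0) + t) + 1 from by omega]
          exact hFsucc _
        rw [hstep, ih ht', map_add, map_smul, hTc m (pos (a m, 0) + t) (by omega) hrr,
          ← hFsucc t, show pos (a m, 0) + t + 1 = pos (a m, 0) + (t+1) from by omega]
    refine ⟨hAreg, hS, ?_⟩
    · have hq1 : 1 ≤ pos (Δ m, 0) := hq_pos m
      have hS' := hS (pos (Δ m, 0) - 1) (by omega)
      have e2 : pos (Δ (m+1), 0) = (pos (a m, 0) + (pos (Δ m, 0) - 1)) + 1 := by
        rw [hqsucc m]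
        omega
      have hstep : F (pos (Δ (m+1), 0)) = T (F (pos (a m, 0) + (pos (Δ m, 0) - 1))) := by
        rw [e2]
        exact hFsucc _
      have e3 : pos (a m, 0) + (pos (Δ m, 0) - 1) = pos (Δ (m+1), 0) - 1 := by
        rw [hqsucc m]
        omega
      have hlast : T (F (pos (Δ m, 0) - 1)) = F (pos (Δ m, 0)) := by
        conv_rhs => rw [show pos (Δ m, 0) = (pos (Δ m, 0) - 1) + 1 from by omega]
        exact (hFsucc _).symm
      rw [hstep, hS', map_add, map_smul, e3, hTd m, hlast, hbase, smul_sub, smul_smul,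
        smul_smul, ← mul_assoc, inv_mul_cancel₀ hAne, one_mul, ← mul_assoc,
        inv_mul_cancel₀ hAne, one_mul, sub_add_cancel]
  have hG : ∀ m, F (pos (Δ m, 0)) = α (pos (Δ m, 0)) • eVec b (pos (Δ m, 0)) := by
    intro m
    induction m with
    | zero =>
      rw [hq0]
      have h1 : F 1 = T (F 0) := hFsucc 0
      rw [h1, hF0, hT0]
    | succ m ih => exact (hreg m ih).2.2
  have hFA : ∀ m j, pos (Δ m, 0) ≤ j → j < pos (a m, 0) → F j = α j • eVec b j :=
    fun m => (hreg m (hG m)).1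
  have hFS : ∀ m t, t < pos (Δ m, 0) →
      F (pos (a m, 0) + t) = (A (Nn m) (a m))⁻¹ • eVec b (pos (a m, 0) + t) + F t :=
    fun m => (hreg m (hG m)).2.1
  -- covering of indices by generations
  have hq_mono : ∀ m, pos (Δ m, 0) < pos (Δ (m+1), 0) := by
    intro m
    rw [hqsucc m]
    have h1 := hq_lt_r m
    have h2 := hq_pos m
    omega
  have cover : ∀ k, 1 ≤ k → ∃ m, pos (Δ m, 0) ≤ k ∧ k < pos (Δ (m+1), 0) := by
    intro k
    induction k with
    | zero => omega
    | succ k ih =>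
      intro _
      rcases Nat.eq_zero_or_pos k with h1 | h1
      · refine ⟨0, by omega, ?_⟩
        have := hq_mono 0
        omega
      · obtain ⟨m, hm1, hm2⟩ := ih h1
        rcases Nat.lt_or_ge (k+1) (pos (Δ (m+1), 0)) with h2 | h2
        · exact ⟨m, by omega, h2⟩
        · refine ⟨m+1, by omega, ?_⟩
          have := hq_mono (m+1)
          omega
  -- support and norm bound for the orbit vectors
  have hFB : ∀ m t, t < pos (Δ m, 0) →
      (F t).support ⊆ (Finset.range (t+1)).image (enum b) ∧
      norm3 A 0 ⇑(F t) ≤ 4 ^ t * A 0 0 := by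
    have hstep : ∀ m, (∀ t, t < pos (Δ m, 0) →
        (F t).support ⊆ (Finset.range (t+1)).image (enum b) ∧
        norm3 A 0 ⇑(F t) ≤ 4 ^ t * A 0 0) → ∀ t, t < pos (Δ (m+1), 0) →
        (F t).support ⊆ (Finset.range (t+1)).image (enum b) ∧
        norm3 A 0 ⇑(F t) ≤ 4 ^ t * A 0 0 := by
      intro m ih t ht
      rcases Nat.lt_or_ge t (pos (Δ m, 0)) with h | h
      · exact ih t h
      rcases Nat.lt_or_ge t (pos (a m, 0)) with h2 | h2
      · -- α-region
        have hft := hFA m t h h2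
        have hα := hαf m t h h2
        constructor
        · rw [hft]
          intro p hp
          have hp2 := Finsupp.support_smul hp
          have hp3 : p = enum b t := by
            have := Finsupp.support_single_subset hp2
            simpa [eVec] using this
          exact Finset.mem_image.2 ⟨t, Finset.mem_range.2 (by omega), hp3.symm⟩
        · rw [hft, norm3_smul, norm3_eVec]
          calc |α t| * A 0 (enum b t).1 ≤ 2 ^ t * (2 ^ t * A 0 0) := by
                apply mul_le_mul (by rw [abs_of_pos hα.1]; exact hα.2) (hA0enum t)
                  (hA0' _ _) (pow_nonneg two_pos.le _)
            _ = 4 ^ t * A 0 0 := by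
                rw [show (4:ℝ) = 2 * 2 from by norm_num, mul_pow]
                ring
      · -- shift region
        obtain ⟨t', rfl⟩ : ∃ t', t = pos (a m, 0) + t' := ⟨t - pos (a m, 0), by omega⟩
        have ht' : t' < pos (Δ m, 0) := by
          have := hqsucc m
          omega
        have ihp := ih t' ht'
        have hft := hFS m t' ht'
        have h1r : 1 ≤ pos (a m, 0) := by
          have := hq_lt_r m
          have := hq_pos m
          omega
        constructor
        · rw [hft]
          intro p hp
          rcases Finset.mem_union.1 (Finsupp.support_add hp) with hp1 | hp1
          · have hp2 := Finsupp.support_smul hp1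
            have hp3 : p = enum b (pos (a m, 0) + t') := by
              have := Finsupp.support_single_subset hp2
              simpa [eVec] using this
            exact Finset.mem_image.2 ⟨pos (a m, 0) + t',
              Finset.mem_range.2 (by omega), hp3.symm⟩
          · have := ihp.1 hp1
            rcases Finset.mem_image.1 this with ⟨k, hk, rfl⟩
            exact Finset.mem_image.2 ⟨k, Finset.mem_range.2
              (by have := Finset.mem_range.1 hk; omega), rfl⟩
        · rw [hft]
          set t := pos (a m, 0) + t' with hts
          calc norm3 A 0 ⇑((A (Nn m) (a m))⁻¹ • eVec b t + F t')
              ≤ norm3 A 0 ⇑((A (Nn m) (a m))⁻¹ • eVec b t) + norm3 A 0 ⇑(F t') :=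
                norm3_add_le A hA0' 0 _ _
            _ ≤ 2 ^ t * A 0 0 + 4 ^ t' * A 0 0 := by
                apply add_le_add _ ihp.2
                rw [norm3_smul, norm3_eVec]
                have habs : |(A (Nn m) (a m))⁻¹| ≤ 1 := by
                  rw [abs_of_pos (inv_pos.2 (hApos _ _))]
                  exact inv_le_one_of_one_le₀ (hA1 _ _)
                calc |(A (Nn m) (a m))⁻¹| * A 0 (enum b t).1
                    ≤ 1 * (2 ^ t * A 0 0) := by
                      apply mul_le_mul habs (hA0enum t) (hA0' _ _) zero_le_one
                  _ = 2 ^ t * A 0 0 := one_mul _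
            _ ≤ 4 ^ t * A 0 0 := by
                have e2 : (2:ℝ) ^ t = 2 ^ (t-1) * 2 := by
                  conv_lhs => rw [show t = (t-1) + 1 from by omega, pow_succ]
                have e4 : (4:ℝ) ^ t = 4 ^ (t-1) * 4 := by
                  conv_lhs => rw [show t = (t-1) + 1 from by omega, pow_succ]
                have h1 : (2:ℝ) ^ (t-1) ≤ 4 ^ (t-1) :=
                  pow_le_pow_left₀ two_pos.le (by norm_num) _
                have h2' : (4:ℝ) ^ t' ≤ 4 ^ (t-1) :=
                  pow_le_pow_right₀ (by norm_num) (by omega)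
                have h0 : (0:ℝ) ≤ 4 ^ (t-1) := by positivity
                have hsc : (2:ℝ) ^ t + 4 ^ t' ≤ 4 ^ t := by linarith
                have hA00 : (0:ℝ) ≤ A 0 0 := hA0' 0 0
                have := mul_le_mul_of_nonneg_right hsc hA00
                rw [add_mul] at this
                linarith
    intro m
    induction m with
    | zero =>
      intro t ht
      rw [hq0] at ht
      have ht0 : t = 0 := by omega
      subst ht0
      constructor
      · rw [hF0]
        intro p hp
        have hp3 : p = enum b 0 := by
          have := Finsupp.support_single_subset hp
          simpa [eVec] using this
        exact Finset.mem_image.2 ⟨0, Finset.mem_range.2 (by omega), hp3.symm⟩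
      · rw [hF0, norm3_eVec, henum_zero]
        simp
    | succ m ih => exact hstep m ih
  -- every basis vector with small index lies in the span of the orbit
  have hespan : ∀ k, eVec b k ∈ Submodule.span ℝ (F '' {j | j ≤ k}) := by
    intro k
    rcases Nat.eq_zero_or_pos k with h0 | h1
    · subst h0
      rw [← hF0]
      exact Submodule.subset_span ⟨0, by simp, rfl⟩
    · obtain ⟨m, hm1, hm2⟩ := cover k h1
      rcases Nat.lt_or_ge k (pos (a m, 0)) with hc | hc
      · have hFk := hFA m k hm1 hc
        have hα : α k ≠ 0 := ne_of_gt (hαf m k hm1 hc).1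
        have he : eVec b k = (α k)⁻¹ • F k := by
          rw [hFk, smul_smul, inv_mul_cancel₀ hα, one_smul]
        rw [he]
        exact Submodule.smul_mem _ _ (Submodule.subset_span ⟨k, by simp, rfl⟩)
      · obtain ⟨t, rfl⟩ : ∃ t, k = pos (a m, 0) + t := ⟨k - pos (a m, 0), by omega⟩
        have ht : t < pos (Δ m, 0) := by
          have := hqsucc m
          omega
        have hFk := hFS m t ht
        have hAne : (A (Nn m) (a m)) ≠ 0 := ne_of_gt (hApos _ _)
        have he : eVec b (pos (a m, 0) + t) =
            A (Nn m) (a m) • F (pos (a m, 0) + t) - A (Nn m) (a m) • F t := by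
          rw [hFk, smul_add, smul_smul, mul_inv_cancel₀ hAne, one_smul]
          abel
        rw [he]
        refine sub_mem ?_ ?_
        · exact Submodule.smul_mem _ _ (Submodule.subset_span ⟨pos (a m, 0) + t, by simp, rfl⟩)
        · exact Submodule.smul_mem _ _ (Submodule.subset_span ⟨t, by simp only [Set.mem_setOf_eq]; omega, rfl⟩)
  -- the support of x
  have hsupp : x.support ⊆ (Finset.range (pos (Δ (n+1), 0))).image (enum b) := by
    refine Submodule.span_induction
      (p := fun y _ => y.support ⊆ (Finset.range (pos (Δ (n+1), 0))).image (enum b))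
      ?_ ?_ ?_ ?_ hx
    · rintro y ⟨j, hj, rfl⟩ p hp
      have hp' : p ∈ (Finsupp.single (enum b j) (1:ℝ)).support := hp
      have hp3 : p = enum b j := by
        have := Finsupp.support_single_subset hp'
        simpa using this
      exact Finset.mem_image.2 ⟨j, Finset.mem_range.2 hj, hp3.symm⟩
    · simp
    · intro y z _ _ hy hz p hp
      rcases Finset.mem_union.1 (Finsupp.support_add hp) with h | h
      exacts [hy h, hz h]
    · intro c y _ hy p hp
      exact hy (Finsupp.support_smul hp)
  -- the representation of x in the basis vectors
  have hxrep : x = ∑ k ∈ Finset.range (pos (Δ (n+1), 0)), x (enum b k) • eVec b k := by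
    ext p
    rw [Finsupp.finset_sum_apply]
    by_cases hp : p ∈ (Finset.range (pos (Δ (n+1), 0))).image (enum b)
    · rcases Finset.mem_image.1 hp with ⟨k₀, hk₀, rfl⟩
      rw [Finset.sum_eq_single k₀]
      · simp [eVec, Finsupp.single_eq_same]
      · intro k hk hne
        have hne' : enum b k ≠ enum b k₀ := fun h => hne (henum_inj h)
        simp [eVec, Finsupp.single_eq_of_ne' hne']
      · intro hk
        exact absurd hk₀ hk
    · have hx0 : x p = 0 := Finsupp.notMem_support_iff.1 (fun hs => hp (hsupp hs))
      rw [hx0]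
      symm
      apply Finset.sum_eq_zero
      intro k hk
      have hne' : enum b k ≠ p := fun h => hp (Finset.mem_image.2 ⟨k, hk, h⟩)
      simp [eVec, Finsupp.single_eq_of_ne' hne']
  -- the tail parts of x
  set w : ℕ × ℕ →₀ ℝ := ∑ t ∈ Finset.range (pos (Δ n, 0)),
      x (enum b (pos (a n, 0) + t)) • eVec b (pos (a n, 0) + t) with hwdef
  set v : ℕ × ℕ →₀ ℝ := ∑ t ∈ Finset.range (pos (Δ n, 0)),
      (A (Nn n) (a n) * x (enum b (pos (a n, 0) + t))) • F t with hvdef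
  have hxsplit : x = (∑ k ∈ Finset.range (pos (a n, 0)), x (enum b k) • eVec b k) + w := by
    conv_lhs => rw [hxrep]
    rw [hqsucc n, Finset.sum_range_add, hwdef]
  have hxw : x - w = ∑ k ∈ Finset.range (pos (a n, 0)), x (enum b k) • eVec b k := by
    conv_lhs => rw [hxsplit]
    abel
  set z : ℕ × ℕ →₀ ℝ := x - w - v with hzdef
  have hz_span : z ∈ Submodule.span ℝ (Set.range fun j : Fin (pos (a n, 0)) => F ↑j) := by
    rw [hzdef]
    apply sub_mem
    · rw [hxw]
      apply Submodule.sum_mem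
      intro k hk
      apply Submodule.smul_mem
      have hk' : k < pos (a n, 0) := Finset.mem_range.1 hk
      refine Submodule.span_mono ?_ (hespan k)
      rintro y ⟨j, hj, rfl⟩
      have hj' : j ≤ k := hj
      exact ⟨⟨j, by omega⟩, rfl⟩
    · apply Submodule.sum_mem
      intro t ht
      apply Submodule.smul_mem
      apply Submodule.subset_span
      have ht' : t < pos (Δ n, 0) := Finset.mem_range.1 ht
      have := hq_lt_r n
      exact ⟨⟨t, by omega⟩, rfl⟩
  obtain ⟨y', hy'⟩ := (Submodule.mem_span_range_iff_exists_fun ℝ).1 hz_span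
  set y : ℕ → ℝ := fun j => if h : j < pos (a n, 0) then y' ⟨j, h⟩
      else A (Nn n) (a n) * x (enum b j) with hydef
  have hsum_r : ∑ j ∈ Finset.range (pos (a n, 0)), y j • F j = z := by
    rw [← hy', ← Fin.sum_univ_eq_sum_range (fun j => y j • F j) (pos (a n, 0))]
    apply Finset.sum_congr rfl
    intro i _
    have hyi : y ↑i = y' i := by
      simp only [hydef]
      rw [dif_pos i.isLt]
    rw [hyi]
  have hAne : A (Nn n) (a n) ≠ 0 := ne_of_gt (hApos _ _)
  have hsum_tail : ∑ t ∈ Finset.range (pos (Δ n, 0)),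
      y (pos (a n, 0) + t) • F (pos (a n, 0) + t) = w + v := by
    rw [hwdef, hvdef, ← Finset.sum_add_distrib]
    apply Finset.sum_congr rfl
    intro t ht
    have ht' : t < pos (Δ n, 0) := Finset.mem_range.1 ht
    have hyv : y (pos (a n, 0) + t) = A (Nn n) (a n) * x (enum b (pos (a n, 0) + t)) := by
      simp only [hydef]
      rw [dif_neg (by omega)]
    rw [hyv, hFS n t ht', smul_add, smul_smul, mul_right_comm,
      mul_inv_cancel₀ hAne, one_mul]
  have hyxsum : ∑ j ∈ Finset.range (pos (Δ (n+1), 0)), y j • F j = x := by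
    rw [hqsucc n, Finset.sum_range_add, hsum_r, hsum_tail, hzdef]
    abel
  have hτx : τ n x = z := by
    conv_lhs => rw [← hyxsum]
    have happ : τ n (∑ j ∈ Finset.range (pos (Δ (n+1), 0)), y j • F j)
        = ∑ j ∈ Finset.range (pos (a n, 0)), y j • F j := by
      simp only [hFdef]
      exact hτ n y
    rw [happ, hsum_r]
  -- the final estimate
  have hA00 : (0:ℝ) ≤ A 0 0 := hA0' 0 0
  have hb1 : norm3 A 0 ⇑z ≤
      (∑ k ∈ Finset.range (pos (a n, 0)), |x (enum b k)| * A 0 (enum b k).1) +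
      ∑ t ∈ Finset.range (pos (Δ n, 0)),
        |x (enum b (pos (a n, 0) + t))| * (A (Nn n) (a n) * (4 ^ t * A 0 0)) := by
    have hzsub : norm3 A 0 ⇑z ≤ norm3 A 0 ⇑(x - w) + norm3 A 0 ⇑v := by
      rw [hzdef]
      exact norm3_sub_le A hA0' 0 _ _
    refine le_trans hzsub (add_le_add ?_ ?_)
    · rw [hxw]
      refine le_trans (norm3_sum_le A hA0' 0 _ _) (le_of_eq ?_)
      apply Finset.sum_congr rfl
      intro k _
      rw [norm3_smul, norm3_eVec]
    · rw [hvdef]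
      refine le_trans (norm3_sum_le A hA0' 0 _ _) ?_
      apply Finset.sum_le_sum
      intro t ht
      have ht' : t < pos (Δ n, 0) := Finset.mem_range.1 ht
      rw [norm3_smul]
      have hfb := (hFB n t ht').2
      have habs : |A (Nn n) (a n) * x (enum b (pos (a n, 0) + t))|
          = A (Nn n) (a n) * |x (enum b (pos (a n, 0) + t))| := by
        rw [abs_mul, abs_of_pos (hApos _ _)]
      rw [habs]
      calc A (Nn n) (a n) * |x (enum b (pos (a n, 0) + t))| * norm3 A 0 ⇑(F t)
          ≤ A (Nn n) (a n) * |x (enum b (pos (a n, 0) + t))| * (4 ^ t * A 0 0) := by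
            apply mul_le_mul_of_nonneg_left hfb
            exact mul_nonneg (hA0' _ _) (abs_nonneg _)
        _ = |x (enum b (pos (a n, 0) + t))| * (A (Nn n) (a n) * (4 ^ t * A 0 0)) := by
            ring
  have hRHS : norm3 A (Nn n + 1) ⇑x =
      (∑ k ∈ Finset.range (pos (a n, 0)), |x (enum b k)| * A (Nn n + 1) (enum b k).1) +
      ∑ t ∈ Finset.range (pos (Δ n, 0)),
        |x (enum b (pos (a n, 0) + t))| * A (Nn n + 1) (a n + t) := by
    rw [norm3_eq_sum_of_subset A (Nn n + 1) x _ hsupp,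
      Finset.sum_image (fun k _ k' _ h => henum_inj h), hqsucc n, Finset.sum_range_add]
    congr 1
    apply Finset.sum_congr rfl
    intro t ht
    have ht' : t < pos (Δ n, 0) := Finset.mem_range.1 ht
    rw [show (enum b (pos (a n, 0) + t)).1 = a n + t from by rw [hra n t (by omega)]]
  rw [hτx, hRHS]
  refine le_trans hb1 (add_le_add ?_ ?_)
  · apply Finset.sum_le_sum
    intro k _
    apply mul_le_mul_of_nonneg_left _ (abs_nonneg _)
    exact hA2m (enum b k).1 (Nat.zero_le _)
  · apply Finset.sum_le_sum
    intro t ht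
    have ht' : t < pos (Δ n, 0) := Finset.mem_range.1 ht
    apply mul_le_mul_of_nonneg_left _ (abs_nonneg _)
    calc A (Nn n) (a n) * (4 ^ t * A 0 0)
        ≤ A (Nn n) (a n) * (4 ^ pos (Δ n, 0) * A 0 0) := by
          apply mul_le_mul_of_nonneg_left _ (hA0' _ _)
          exact mul_le_mul_of_nonneg_right
            (pow_le_pow_right₀ (by norm_num) (le_of_lt ht')) hA00
      _ = A (Nn n) (a n) * 4 ^ pos (Δ n, 0) * A 0 0 := by ring
      _ ≤ A (Nn n + 1) (a n) := hc3 n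
      _ ≤ A (Nn n + 1) (a n + t) := hA3m (Nn n + 1) (Nat.le_add_right _ _)
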